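/- Suppose the symmetric Assumption 2.1(i) and (iii) hold, and take η² = 1. Regard f₂(β) = (B(β)+C(β) − β^K·T)² − F(β)² and g₂(β) = 4·A(β)·D(β) as real functions of β ∈ [0,1]. Then f₂ and g₂ are differentiable at 1 from within [0,1], with f₂′(1) = −4·A(1)(C′(1) − K(C(1)+D(1))) − 4·D(1)(B′(1) − K(A(1)+B(1))) and g₂′(1) = 4(A(1)·D′(1) + D(1)·A′(1)), so that f₂′(1) − g₂′(1) = −4·[D(1)(A′(1) − K·A(1) + B′(1) − K·B(1)) + A(1)(C′(1) − K·C(1) + D′(1) − K·D(1))]. In particular, if the ergodicity condition (2.7) holds then f₂′(1) < g₂′(1). -/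

import Mathlib

open scoped BigOperators

/-- `Gval a β = Σ_{m=0}^∞ a_m β^m`, encoding `A(β) = Σ_{k=-∞}^K a_k β^{K-k}`
via the reindexing `m = K - k`. -/
noncomputable def Gval (a : ℕ → ℝ) (β : ℝ) : ℝ := ∑' m : ℕ, a m * β ^ m

/-- `A(1)`. -/
noncomputable def Gone (a : ℕ → ℝ) : ℝ := ∑' m : ℕ, a m

/-- `A'(1) = Σ_{k=-∞}^K (K-k) a_k`. -/
noncomputable def Gder (a : ℕ → ℝ) : ℝ := ∑' m : ℕ, (m : ℝ) * a m

/-- `T = A(1)+B(1)+C(1)+D(1)`. -/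
noncomputable def Tval (a b cc d : ℕ → ℝ) : ℝ := Gone a + Gone b + Gone cc + Gone d

/-- `F(β) = β^K (A(1)+B(1)-C(1)-D(1)) - B(β) + C(β)`. -/
noncomputable def Fval (K : ℕ) (a b cc d : ℕ → ℝ) (β : ℝ) : ℝ :=
  β ^ K * (Gone a + Gone b - Gone cc - Gone d) - Gval b β + Gval cc β

/-- `f₂(β) = (B(β)+C(β) - β^K T)² - F(β)²` (the case `η² = 1`). -/
noncomputable def f2R (K : ℕ) (a b cc d : ℕ → ℝ) (β : ℝ) : ℝ :=
  (Gval b β + Gval cc β - β ^ K * Tval a b cc d) ^ 2 - Fval K a b cc d β ^ 2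

/-- `g₂(β) = 4 A(β) D(β)` (the case `η² = 1`). -/
noncomputable def g2R (a d : ℕ → ℝ) (β : ℝ) : ℝ := 4 * Gval a β * Gval d β

open Topology Filter

lemma Gval_one (a : ℕ → ℝ) : Gval a 1 = Gone a := by
  simp [Gval, Gone]

lemma summable_pow {a : ℕ → ℝ} (nna : ∀ m, 0 ≤ a m) (suma : Summable a)
    {β : ℝ} (h0 : 0 ≤ β) (h1 : β ≤ 1) : Summable (fun m => a m * β ^ m) := by
  apply suma.of_nonneg_of_le (fun m => mul_nonneg (nna m) (pow_nonneg h0 m))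
  intro m
  calc a m * β ^ m ≤ a m * 1 := by
        apply mul_le_mul_of_nonneg_left _ (nna m)
        exact pow_le_one₀ h0 h1
    _ = a m := mul_one _

lemma key {a : ℕ → ℝ} (nna : ∀ m, 0 ≤ a m) (suma : Summable a)
    (dera : Summable (fun m : ℕ => (m : ℝ) * a m)) :
    HasDerivWithinAt (Gval a) (Gder a) (Set.Icc (0:ℝ) 1) 1 := by
  rw [hasDerivWithinAt_iff_tendsto_slope]
  have hcongr : ∀ β ∈ Set.Icc (0:ℝ) 1 \ {1},
      slope (Gval a) 1 β = ∑' m : ℕ, a m * ∑ j ∈ Finset.range m, β ^ j := by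
    rintro β ⟨⟨h0, h1⟩, hne⟩
    have hne' : β ≠ 1 := hne
    have hs : Summable (fun m => a m * β ^ m) := summable_pow nna suma h0 h1
    rw [slope_def_field, Gval_one, Gval, Gone, div_eq_iff (sub_ne_zero.2 hne')]
    rw [← Summable.tsum_sub hs suma]
    rw [← tsum_mul_right]
    congr 1; funext m
    rw [mul_assoc, geom_sum_mul, mul_sub, mul_one]
  apply Filter.Tendsto.congr' _ ?_
  · exact fun β => ∑' m : ℕ, a m * ∑ j ∈ Finset.range m, β ^ j
  · filter_upwards [self_mem_nhdsWithin] with β hβ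
    exact (hcongr β hβ).symm
  · have := tendsto_tsum_of_dominated_convergence (𝓕 := 𝓝[Set.Icc (0:ℝ) 1 \ {1}] (1:ℝ))
      (f := fun β m => a m * ∑ j ∈ Finset.range m, β ^ j)
      (g := fun m => (m : ℝ) * a m) (bound := fun m => (m:ℝ) * a m) dera ?_ ?_
    · exact this
    · intro m
      have : ContinuousAt (fun β : ℝ => a m * ∑ j ∈ Finset.range m, β ^ j) 1 := by
        fun_prop
      have h := this.continuousWithinAt (s := Set.Icc (0:ℝ) 1 \ {1}) |>.tendsto
      simpa [mul_comm] using h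
    · filter_upwards [self_mem_nhdsWithin] with β hβ m
      obtain ⟨⟨h0, h1⟩, -⟩ := hβ
      have hb : ∑ j ∈ Finset.range m, β ^ j ≤ m := by
        calc ∑ j ∈ Finset.range m, β ^ j ≤ ∑ j ∈ Finset.range m, (1:ℝ) := by
              apply Finset.sum_le_sum; intro j _; exact pow_le_one₀ h0 h1
          _ = m := by simp
      have hb0 : 0 ≤ ∑ j ∈ Finset.range m, β ^ j :=
        Finset.sum_nonneg fun j _ => pow_nonneg h0 j
      rw [Real.norm_eq_abs, abs_mul, abs_of_nonneg (nna m), abs_of_nonneg hb0, mul_comm ((m:ℝ)) (a m)]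
      exact mul_le_mul_of_nonneg_left hb (nna m)


/-- Under the symmetric Assumption 2.1(i) and (iii), with `η² = 1`, the real functions
`f₂` and `g₂` are differentiable at `1` from within `[0,1]` with the stated derivatives;
consequently `f₂'(1) - g₂'(1) = -4[D(1)(A'(1)-K·A(1)+B'(1)-K·B(1)) +
A(1)(C'(1)-K·C(1)+D'(1)-K·D(1))]`, and the ergodicity condition (2.7) implies
`f₂'(1) < g₂'(1)`. -/
theorem stmt11 (c K : ℕ) (hc : 1 ≤ c) (hK : 1 ≤ K) (a b cc d : ℕ → ℝ)
    (nna : ∀ m, 0 ≤ a m) (nnb : ∀ m, 0 ≤ b m)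
    (nnc : ∀ m, 0 ≤ cc m) (nnd : ∀ m, 0 ≤ d m)
    (suma : Summable a) (sumb : Summable b) (sumc : Summable cc) (sumd : Summable d)
    (dera : Summable (fun m : ℕ => (m : ℝ) * a m))
    (derb : Summable (fun m : ℕ => (m : ℝ) * b m))
    (derc : Summable (fun m : ℕ => (m : ℝ) * cc m))
    (derd : Summable (fun m : ℕ => (m : ℝ) * d m)) :
    HasDerivWithinAt (f2R K a b cc d)
        (-4 * Gone a * (Gder cc - K * (Gone cc + Gone d))
          - 4 * Gone d * (Gder b - K * (Gone a + Gone b)))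
        (Set.Icc (0 : ℝ) 1) 1
    ∧ HasDerivWithinAt (g2R a d)
        (4 * (Gone a * Gder d + Gone d * Gder a)) (Set.Icc (0 : ℝ) 1) 1
    ∧ (-4 * Gone a * (Gder cc - K * (Gone cc + Gone d))
          - 4 * Gone d * (Gder b - K * (Gone a + Gone b)))
        - 4 * (Gone a * Gder d + Gone d * Gder a)
      = -4 * (Gone d * (Gder a - K * Gone a + Gder b - K * Gone b)
          + Gone a * (Gder cc - K * Gone cc + Gder d - K * Gone d))
    ∧ (0 < Gone d * (Gder a - K * Gone a + Gder b - K * Gone b)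
          + Gone a * (Gder cc - K * Gone cc + Gder d - K * Gone d) →
        -4 * Gone a * (Gder cc - K * (Gone cc + Gone d))
            - 4 * Gone d * (Gder b - K * (Gone a + Gone b))
          < 4 * (Gone a * Gder d + Gone d * Gder a)) := by
  have hA := key nna suma dera
  have hB := key nnb sumb derb
  have hC := key nnc sumc derc
  have hD := key nnd sumd derd
  have hpow : HasDerivWithinAt (fun β : ℝ => β ^ K) (K : ℝ) (Set.Icc (0:ℝ) 1) 1 := by
    simpa using (hasDerivAt_pow K (1:ℝ)).hasDerivWithinAt
  refine ⟨?_, ?_, by ring, ?_⟩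
  · have hP : HasDerivWithinAt (fun β => Gval b β + Gval cc β - β ^ K * Tval a b cc d)
        (Gder b + Gder cc - (K : ℝ) * Tval a b cc d) (Set.Icc (0:ℝ) 1) 1 :=
      (hB.add hC).sub (hpow.mul_const _)
    have hF : HasDerivWithinAt (Fval K a b cc d)
        ((K : ℝ) * (Gone a + Gone b - Gone cc - Gone d) - Gder b + Gder cc)
        (Set.Icc (0:ℝ) 1) 1 := ((hpow.mul_const _).sub hB).add hC
    have := (hP.pow 2).sub (hF.pow 2)
    refine this.congr_deriv ?_
    simp only [Gval_one, Fval, one_pow, one_mul, Tval, pow_one, Nat.add_sub_cancel]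
    ring
  · have := ((hA.const_mul 4).mul hD)
    refine this.congr_deriv ?_
    simp only [Gval_one]
    ring
  · intro h
    nlinarith [h]
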